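/- Let J be the ideal of ℚ[Λ] generated by {1 − e^α : α ∈ Φ⁺}. Then for all integers m ≥ k ≥ 0, every f ∈ J^m, every w ∈ W with ℓ(w) = k, and every reduced word for w, one has L_w(f) ∈ J^{m−k}. -/

import Mathlib

/- Context: a reduced crystallographic root system `Φ` spanning a finite-dimensional
`ℚ`-vector space `V`, with Weyl group `W` (a Coxeter system whose simple reflections
are indexed by the base `Δ` of simple roots), positive roots `Φ⁺`, weight lattice
`Λ = {λ ∈ V : ⟨λ, α^∨⟩ ∈ ℤ for all α ∈ Φ}`, and `ρ = (1/2)·Σ_{α ∈ Φ⁺} α`.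
`ℚ[Λ]` is the group algebra of `Λ` over `ℚ` with basis `e^λ`, on which `W` acts by ring
automorphisms via `w · e^λ = e^{w(λ)}`.  For a simple root `α`, the Demazure operator
`L_{s_α}` is the unique `ℚ`-linear map with `(1 - e^α) · L_{s_α}(f) = f - s_α · f`, and for
a reduced word `w = s_{α₁} ⋯ s_{α_k}` we set `L_w = L_{s_{α₁}} ∘ ⋯ ∘ L_{s_{α_k}}`. -/

/-- All the data of the context: the root system, the simple/positive roots, `ρ`, the
weight lattice `Λ`, and the Weyl group `W` with its Coxeter structure and its action
on `V` (where the simple reflection indexed by `b : B` acts as the reflection attached to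
the simple root `idx b`). -/
structure RootCtx (V : Type) [AddCommGroup V] [Module ℚ V]
    (B : Type) (W : Type) [Group W] (M : CoxeterMatrix B) where
  finV : FiniteDimensional ℚ V
  /-- the finite set of roots -/
  Φ : Finset V
  span_eq_top : Submodule.span ℚ (Φ : Set V) = ⊤
  /-- `coroot α` is the linear functional `⟨·, α^∨⟩` -/
  coroot : V → V →ₗ[ℚ] ℚ
  coroot_self : ∀ α ∈ Φ, coroot α α = 2
  crystallographic : ∀ α ∈ Φ, ∀ β ∈ Φ, ∃ n : ℤ, (n : ℚ) = coroot α β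
  /-- the root system is reduced -/
  reduced : ∀ α ∈ Φ, ∀ c : ℚ, c • α ∈ Φ → c = 1 ∨ c = -1
  reflect_root_mem : ∀ α ∈ Φ, ∀ β ∈ Φ, β - coroot α β • α ∈ Φ
  /-- the base of simple roots -/
  Δ : Finset V
  Δ_sub : Δ ⊆ Φ
  Δ_indep : LinearIndependent ℚ (fun β : {x // x ∈ Δ} => (β : V))
  /-- the set of positive roots -/
  Φpos : Finset V
  Φpos_sub : Φpos ⊆ Φ
  mem_Φpos : ∀ α ∈ Φ, (α ∈ Φpos ↔
    ∃ c : V → ℚ, (∀ β ∈ Δ, 0 ≤ c β) ∧ α = ∑ β ∈ Δ, c β • β)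
  pos_or_neg : ∀ α ∈ Φ, α ∈ Φpos ∨ -α ∈ Φpos
  /-- the half-sum of the positive roots -/
  ρ : V
  ρ_def : (2 : ℚ) • ρ = ∑ α ∈ Φpos, α
  /-- the weight lattice -/
  Λ : AddSubgroup V
  mem_Λ : ∀ x : V, x ∈ Λ ↔ ∀ α ∈ Φ, ∃ n : ℤ, (n : ℚ) = coroot α x
  ρ_mem : ρ ∈ Λ
  root_mem : ∀ α ∈ Φ, α ∈ Λ
  /-- the Weyl group `W` as a Coxeter system, whose simple reflections are the reflections
  in the simple roots -/
  cs : CoxeterSystem M W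
  /-- the indexing of the simple roots by `B` -/
  idx : B ≃ {α // α ∈ Δ}
  /-- the (faithful) action of the Weyl group on `V` -/
  act : W →* (V ≃ₗ[ℚ] V)
  act_faithful : Function.Injective act
  act_simple : ∀ (b : B) (x : V),
    act (cs.simple b) x = x - coroot (idx b : V) x • (idx b : V)
  act_mem : ∀ (w : W), ∀ x ∈ Λ, act w x ∈ Λ

namespace RootCtx

variable {V B W : Type} [AddCommGroup V] [Module ℚ V] [Group W] {M : CoxeterMatrix B}
variable (ctx : RootCtx V B W M)

/-- The group algebra `ℚ[Λ]`. -/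
abbrev QΛ : Type := AddMonoidAlgebra ℚ ↥ctx.Λ

/-- The basis element `e^λ` of `ℚ[Λ]`. -/
noncomputable def e (lam : ↥ctx.Λ) : ctx.QΛ := AddMonoidAlgebra.of' ℚ ↥ctx.Λ lam

/-- `ρ` as an element of the weight lattice. -/
def ρΛ : ↥ctx.Λ := ⟨ctx.ρ, ctx.ρ_mem⟩

/-- The simple root indexed by `b`, as an element of the weight lattice. -/
def simpleRoot (b : B) : ↥ctx.Λ :=
  ⟨(ctx.idx b : V), ctx.root_mem _ (ctx.Δ_sub (ctx.idx b).2)⟩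

/-- The action of `w ∈ W` on the weight lattice `Λ`. -/
noncomputable def actΛ (w : W) : ↥ctx.Λ ≃+ ↥ctx.Λ where
  toFun x := ⟨ctx.act w x, ctx.act_mem w x x.2⟩
  invFun x := ⟨ctx.act w⁻¹ x, ctx.act_mem w⁻¹ x x.2⟩
  left_inv x := by
    ext
    show (ctx.act w⁻¹ * ctx.act w) (x : V) = (x : V)
    rw [← map_mul, inv_mul_cancel, map_one]
    rfl
  right_inv x := by
    ext
    show (ctx.act w * ctx.act w⁻¹) (x : V) = (x : V)
    rw [← map_mul, mul_inv_cancel, map_one]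
    rfl
  map_add' x y := by
    ext
    show ctx.act w (↑x + ↑y) = ctx.act w x + ctx.act w y
    exact map_add _ _ _

/-- The action of `w ∈ W` on `ℚ[Λ]` by `ℚ`-algebra (in particular ring) automorphisms,
with `w · e^λ = e^{w(λ)}`. -/
noncomputable def wact (w : W) : ctx.QΛ ≃ₐ[ℚ] ctx.QΛ :=
  AddMonoidAlgebra.domCongr ℚ ℚ (ctx.actΛ w)

/-- The augmentation `ε : ℚ[Λ] → ℚ`, the `ℚ`-algebra homomorphism with `ε(e^λ) = 1`. -/
noncomputable def eps : ctx.QΛ →ₐ[ℚ] ℚ := AddMonoidAlgebra.lift ℚ ℚ ↥ctx.Λ 1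

/-- `L` is *the* Demazure operator `L_{s_α}` attached to the simple root `α = idx b`:
the unique `ℚ`-linear endomorphism of `ℚ[Λ]` satisfying
`(1 - e^α) * L f = f - s_α · f` for all `f`. -/
def IsDemazure (b : B) (L : ctx.QΛ →ₗ[ℚ] ctx.QΛ) : Prop :=
  ∀ f : ctx.QΛ, (1 - ctx.e (ctx.simpleRoot b)) * L f = f - ctx.wact (ctx.cs.simple b) f

/-- Given a family `L` of Demazure operators indexed by the simple roots,
`Lword L [α₁, …, α_k] = L_{s_{α₁}} ∘ ⋯ ∘ L_{s_{α_k}}`; applied to reduced words it yields the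
operators `L_w`. -/
noncomputable def Lword (L : B → ctx.QΛ →ₗ[ℚ] ctx.QΛ) (ω : List B) :
    ctx.QΛ →ₗ[ℚ] ctx.QΛ :=
  ω.foldr (fun b g => (L b).comp g) LinearMap.id

/-- The Bruhat order on `W`: `v ≤ w` iff some (equivalently, every) reduced word for `w`
contains a subword which is a reduced word for `v`. -/
def BruhatLE (v w : W) : Prop :=
  ∃ ω : List B, ctx.cs.IsReduced ω ∧ ctx.cs.wordProd ω = w ∧
    ∃ ω' : List B, ω'.Sublist ω ∧ ctx.cs.IsReduced ω' ∧ ctx.cs.wordProd ω' = v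

end RootCtx

/-- The ideal `J` of `ℚ[Λ]` generated by `{1 − e^α : α ∈ Φ⁺}`. -/
noncomputable def RootCtx.posIdeal {V B W : Type} [AddCommGroup V] [Module ℚ V] [Group W]
    {M : CoxeterMatrix B} (ctx : RootCtx V B W M) : Ideal ctx.QΛ :=
  Ideal.span {x : ctx.QΛ | ∃ α : V, ∃ hα : α ∈ ctx.Φpos,
    x = 1 - ctx.e ⟨α, ctx.root_mem α (ctx.Φpos_sub hα)⟩}


instance uniqueSumsOfSubgroup {V : Type} [AddCommGroup V] [Module ℚ V] (G : AddSubgroup V) :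
    UniqueSums ↥G :=
  UniqueSums.of_injective_addHom G.subtype.toAddHom Subtype.coe_injective inferInstance

namespace RootCtx

variable {V B W : Type} [AddCommGroup V] [Module ℚ V] [Group W] {M : CoxeterMatrix B}
variable (ctx : RootCtx V B W M)

lemma e_mul (a b : ↥ctx.Λ) : ctx.e a * ctx.e b = ctx.e (a + b) := by
  simp [RootCtx.e, AddMonoidAlgebra.of'_apply, AddMonoidAlgebra.single_mul_single]

lemma e_zero : ctx.e 0 = 1 := by
  simp [RootCtx.e, AddMonoidAlgebra.of'_apply, AddMonoidAlgebra.one_def]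

lemma wact_e (w : W) (lam : ↥ctx.Λ) : ctx.wact w (ctx.e lam) = ctx.e (ctx.actΛ w lam) := by
  simp [RootCtx.wact, RootCtx.e, AddMonoidAlgebra.of'_apply]

lemma simpleRoot_ne_zero (b : B) : ctx.simpleRoot b ≠ 0 := by
  intro h
  have h2 := ctx.coroot_self _ (ctx.Δ_sub (ctx.idx b).2)
  have h3 : (ctx.simpleRoot b : V) = 0 := by rw [h]; rfl
  rw [show ((ctx.idx b : V)) = (ctx.simpleRoot b : V) from rfl, h3] at h2
  simp at h2

lemma e_simple_ne_one (b : B) : ctx.e (ctx.simpleRoot b) ≠ 1 := by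
  intro h
  rw [RootCtx.e, AddMonoidAlgebra.of'_apply, AddMonoidAlgebra.one_def] at h
  rcases AddMonoidAlgebra.single_inj.mp h with ⟨h1, _⟩ | ⟨h1, _⟩
  · exact ctx.simpleRoot_ne_zero b h1
  · exact one_ne_zero h1

lemma one_sub_e_simple_ne_zero (b : B) : (1 : ctx.QΛ) - ctx.e (ctx.simpleRoot b) ≠ 0 :=
  sub_ne_zero.mpr (Ne.symm (ctx.e_simple_ne_one b))

lemma one_sub_e_mem {γ : V} (hγ : γ ∈ ctx.Φ) :
    (1 : ctx.QΛ) - ctx.e ⟨γ, ctx.root_mem γ hγ⟩ ∈ ctx.posIdeal := by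
  rcases ctx.pos_or_neg γ hγ with h | h
  · exact Ideal.subset_span ⟨γ, h, rfl⟩
  · have hnγ : -γ ∈ ctx.Λ := ctx.root_mem _ (ctx.Φpos_sub h)
    have harg : (⟨γ, ctx.root_mem γ hγ⟩ + ⟨-γ, hnγ⟩ : ↥ctx.Λ) = 0 :=
      Subtype.ext (add_neg_cancel γ)
    have key : (1 : ctx.QΛ) - ctx.e ⟨γ, ctx.root_mem γ hγ⟩
        = (-(ctx.e ⟨γ, ctx.root_mem γ hγ⟩)) * (1 - ctx.e ⟨-γ, hnγ⟩) := by
      rw [mul_sub, mul_one, neg_mul, neg_sub_neg, ctx.e_mul, harg, ctx.e_zero]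
    rw [key]
    exact Ideal.mul_mem_left _ _ (Ideal.subset_span ⟨-γ, h, rfl⟩)

lemma wact_simple_posIdeal (b : B) {a : ctx.QΛ} (ha : a ∈ ctx.posIdeal) :
    ctx.wact (ctx.cs.simple b) a ∈ ctx.posIdeal := by
  induction ha using Submodule.span_induction with
  | mem x hx =>
    obtain ⟨β, hβ, rfl⟩ := hx
    have hβΦ : β ∈ ctx.Φ := ctx.Φpos_sub hβ
    have hαΦ : (ctx.idx b : V) ∈ ctx.Φ := ctx.Δ_sub (ctx.idx b).2
    have hγΦ : β - ctx.coroot (ctx.idx b : V) β • (ctx.idx b : V) ∈ ctx.Φ :=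
      ctx.reflect_root_mem _ hαΦ _ hβΦ
    have hval : ((ctx.actΛ (ctx.cs.simple b) ⟨β, ctx.root_mem β hβΦ⟩ : ↥ctx.Λ) : V)
        = β - ctx.coroot (ctx.idx b : V) β • (ctx.idx b : V) := ctx.act_simple b β
    have : ctx.actΛ (ctx.cs.simple b) ⟨β, ctx.root_mem β hβΦ⟩
        = ⟨_, ctx.root_mem _ hγΦ⟩ := Subtype.ext hval
    rw [map_sub, map_one, ctx.wact_e, this]
    exact ctx.one_sub_e_mem hγΦ
  | zero => simpa using Submodule.zero_mem _
  | add x y _ _ hx hy => rw [map_add]; exact add_mem hx hy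
  | smul r x _ hx =>
    rw [smul_eq_mul, map_mul]
    exact Ideal.mul_mem_left _ _ hx

lemma wact_simple_pow (b : B) (n : ℕ) :
    ∀ a ∈ ctx.posIdeal ^ n, ctx.wact (ctx.cs.simple b) a ∈ ctx.posIdeal ^ n := by
  induction n with
  | zero => intro a _; simpa using Submodule.mem_top
  | succ n ih =>
    intro a ha
    rw [pow_succ] at ha ⊢
    refine Submodule.mul_induction_on ha ?_ ?_
    · intro x hx y hy
      rw [map_mul]
      exact Ideal.mul_mem_mul (ih x hx) (ctx.wact_simple_posIdeal b hy)
    · intro x y hx hy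
      rw [map_add]; exact add_mem hx hy

lemma demazure_leibniz (b : B) {Lb : ctx.QΛ →ₗ[ℚ] ctx.QΛ} (hLb : ctx.IsDemazure b Lb)
    (f g : ctx.QΛ) :
    Lb (f * g) = Lb f * g + ctx.wact (ctx.cs.simple b) f * Lb g := by
  apply mul_left_cancel₀ (ctx.one_sub_e_simple_ne_zero b)
  have expand : (1 - ctx.e (ctx.simpleRoot b)) * (Lb f * g + ctx.wact (ctx.cs.simple b) f * Lb g)
      = ((1 - ctx.e (ctx.simpleRoot b)) * Lb f) * g
        + ctx.wact (ctx.cs.simple b) f * ((1 - ctx.e (ctx.simpleRoot b)) * Lb g) := by ring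
  rw [hLb (f * g), expand, hLb f, hLb g, map_mul]
  ring

lemma demazure_pow_mem (b : B) {Lb : ctx.QΛ →ₗ[ℚ] ctx.QΛ} (hLb : ctx.IsDemazure b Lb) :
    ∀ m : ℕ, ∀ f ∈ ctx.posIdeal ^ (m + 1), Lb f ∈ ctx.posIdeal ^ m := by
  intro m
  induction m with
  | zero => intro f _; simpa using Submodule.mem_top
  | succ n ih =>
    intro f hf
    rw [pow_succ] at hf
    refine Submodule.mul_induction_on hf ?_ ?_
    · intro x hx y hy
      rw [ctx.demazure_leibniz b hLb x y]
      refine add_mem ?_ ?_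
      · rw [pow_succ]; exact Ideal.mul_mem_mul (ih x hx) hy
      · exact Ideal.mul_mem_right _ _ (ctx.wact_simple_pow b (n + 1) x hx)
    · intro x y hx hy
      rw [map_add]; exact add_mem hx hy

lemma demazure_mem_sub (b : B) {Lb : ctx.QΛ →ₗ[ℚ] ctx.QΛ} (hLb : ctx.IsDemazure b Lb)
    (m : ℕ) (f : ctx.QΛ) (hf : f ∈ ctx.posIdeal ^ m) : Lb f ∈ ctx.posIdeal ^ (m - 1) := by
  cases m with
  | zero => simpa using Submodule.mem_top
  | succ n => exact ctx.demazure_pow_mem b hLb n f hf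

lemma lword_mem (L : B → ctx.QΛ →ₗ[ℚ] ctx.QΛ) (hL : ∀ b : B, ctx.IsDemazure b (L b)) :
    ∀ (ω : List B) (m : ℕ) (f : ctx.QΛ), f ∈ ctx.posIdeal ^ m →
      ctx.Lword L ω f ∈ ctx.posIdeal ^ (m - ω.length) := by
  intro ω
  induction ω with
  | nil => intro m f hf; simpa [RootCtx.Lword] using hf
  | cons b t ih =>
    intro m f hf
    have h2 := ctx.demazure_mem_sub b (hL b) (m - t.length) _ (ih m f hf)
    have hrw : ctx.Lword L (b :: t) f = L b (ctx.Lword L t f) := rfl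
    rw [hrw, List.length_cons, ← Nat.sub_sub]
    exact h2

end RootCtx

/-- for all `m ≥ k ≥ 0`, every `f ∈ J^m` and every `w ∈ W` with `ℓ(w) = k`,
one has `L_w(f) ∈ J^{m−k}` for every reduced word for `w`. -/
theorem stmt14 {V B W : Type} [AddCommGroup V] [Module ℚ V] [Group W] {M : CoxeterMatrix B}
    (ctx : RootCtx V B W M)
    (L : B → ctx.QΛ →ₗ[ℚ] ctx.QΛ) (hL : ∀ b : B, ctx.IsDemazure b (L b))
    (m k : ℕ) (hkm : k ≤ m) (f : ctx.QΛ) (hf : f ∈ ctx.posIdeal ^ m)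
    (w : W) (hw : ctx.cs.length w = k) :
    ∀ ω : List B, ctx.cs.IsReduced ω → ctx.cs.wordProd ω = w →
      ctx.Lword L ω f ∈ ctx.posIdeal ^ (m - k) := by
  intro ω hred hprod
  have hlen : ω.length = k := by rw [← hw, ← hprod]; exact hred.symm
  rw [← hlen]
  exact ctx.lword_mem L hL ω m f hf
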